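/- The quasi-monotonic surjections are precisely the maps u_α: for every multi-index α of length k and dimension ≤ n, the map u_α : [n] → [n−k] is a surjective quasi-monotonic function; and conversely, every surjective quasi-monotonic function h : [n] → [m] (so m ≤ n) is equal to u_α for some multi-index α of length n−m and dimension ≤ n. -/

import Mathlib

/-- The elementary coface `d_i^{(n+1)} : [n] → [n+1]` (monotonic injection omitting `i`):
`k ↦ k` for `k < i` and `k ↦ k+1` for `k ≥ i`. -/
def dMap (n i : ℕ) : Fin (n + 1) → Fin (n + 2) :=
  fun k => if (k : ℕ) < i then ⟨k, by omega⟩ else ⟨(k : ℕ) + 1, by omega⟩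

/-- The elementary quasi-codegeneracy `u_i^{(n)} : [n+1] → [n]`:
`u_i 0 = u_i i = 0`, `u_i k = k` for `1 ≤ k ≤ i-1`, and `u_i k = k-1` for `k > i`. -/
def uMap (n i : ℕ) : Fin (n + 2) → Fin (n + 1) :=
  fun k => if (k : ℕ) = 0 ∨ (k : ℕ) = i then 0
    else if h : (k : ℕ) < i ∧ (k : ℕ) < n + 1 then ⟨k, h.2⟩
    else ⟨(k : ℕ) - 1, by omega⟩

/-- A function `f : [n] → [m]` is quasi-monotonic if `f 0 = 0` and `f` is strictly
monotonic outside the preimage of `0`. -/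
def QuasiMonotonic {n m : ℕ} (f : Fin (n + 1) → Fin (m + 1)) : Prop :=
  f 0 = 0 ∧ ∀ p q : Fin (n + 1), p < q → f p ≠ 0 → f q ≠ 0 → f p < f q

/-- A multi-index of dimension `≤ n`: a strictly increasing sequence of indices
`i_1 < … < i_k` with `1 ≤ i_p ≤ n` for all `p` (its length is `α.length`). -/
def IsMultiIndex (n : ℕ) (α : List ℕ) : Prop :=
  List.Chain' (· < ·) α ∧ ∀ i ∈ α, 1 ≤ i ∧ i ≤ n

/-- The quasi-codegeneracy `u_α = u_{i_1} ∘ u_{i_2} ∘ ⋯ ∘ u_{i_k} : [n] → [n-k]`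
associated to a multi-index `α = (i_1, …, i_k)`; each elementary factor is taken at the
appropriate dimension (`u_{i_k}` is applied first, at the highest dimension). -/
def uComp (n : ℕ) : (α : List ℕ) → α.length ≤ n → Fin (n + 1) → Fin (n - α.length + 1)
  | [], _ => fun k => k
  | i :: rest, h => fun k =>
      Fin.cast (by simp only [List.length_cons] at h ⊢; omega)
        (uMap (n - rest.length - 1) i
          (Fin.cast (by simp only [List.length_cons] at h; omega)
            (uComp n rest (by simp only [List.length_cons] at h; omega) k)))

/-- The coface `d_α = d_{i_k} ∘ d_{i_{k-1}} ∘ ⋯ ∘ d_{i_1} : [n-k] → [n]`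
associated to a multi-index `α = (i_1, …, i_k)`; each elementary factor is taken at the
appropriate dimension (`d_{i_1}` is applied first, at the lowest dimension). -/
def dComp (n : ℕ) : (α : List ℕ) → α.length ≤ n → Fin (n - α.length + 1) → Fin (n + 1)
  | [], _ => fun k => k
  | i :: rest, h => fun k =>
      dComp n rest (by simp only [List.length_cons] at h; omega)
        (Fin.cast (by simp only [List.length_cons] at h; omega)
          (dMap (n - rest.length - 1) i
            (Fin.cast (by simp only [List.length_cons] at h ⊢; omega) k)))

namespace QMAux

/-- ℕ-level version of `uMap`. -/
def uVal (i v : ℕ) : ℕ :=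
  if v = 0 then 0 else if v = i then 0 else if v < i then v else v - 1

/-- ℕ-level version of `uComp`. -/
def uListVal : List ℕ → ℕ → ℕ
  | [], v => v
  | i :: rest, v => uVal i (uListVal rest v)

lemma uMap_val (n i : ℕ) (hi : i ≤ n + 1) (k : Fin (n + 2)) :
    (uMap n i k).val = uVal i (k : ℕ) := by
  unfold uMap uVal
  split_ifs <;> simp_all <;> omega

lemma inc_bound {n : ℕ} (l : List ℕ) (i : ℕ) (hp : List.Pairwise (· < ·) (i :: l))
    (hb : ∀ x ∈ i :: l, x ≤ n) : i + l.length ≤ n := by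
  induction l generalizing i with
  | nil => simpa using hb i (by simp)
  | cons j l ih =>
    have h1 : i < j := (List.pairwise_cons.1 hp).1 j (by simp)
    have h2 := ih j (List.pairwise_cons.1 hp).2
      (fun x hx => hb x (by simp at hx ⊢; tauto))
    simp only [List.length_cons]
    omega

lemma uComp_val (n : ℕ) (α : List ℕ) (hp : List.Pairwise (· < ·) α)
    (hb : ∀ i ∈ α, 1 ≤ i ∧ i ≤ n) (hlen : α.length ≤ n) (x : Fin (n + 1)) :
    (uComp n α hlen x).val = uListVal α (x : ℕ) := by
  induction α with
  | nil => rfl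
  | cons i rest ih =>
    have hrest : rest.length ≤ n := by simp at hlen; omega
    have hib := inc_bound rest i hp (fun x hx => (hb x hx).2)
    have hi1 : 1 ≤ i := (hb i (by simp)).1
    have hi : i ≤ (n - rest.length - 1) + 1 := by omega
    simp only [uComp, Fin.coe_cast]
    rw [uMap_val _ _ hi]
    simp only [Fin.coe_cast]
    rw [ih (List.pairwise_cons.1 hp).2 (fun j hj => hb j (by simp [hj]))]
    rfl

lemma uVal_le {m i v : ℕ} (hi1 : 1 ≤ i) (hi2 : i ≤ m + 1) (hv : v ≤ m + 1) :
    uVal i v ≤ m := by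
  unfold uVal; split_ifs <;> first | exact absurd ‹False› not_false | omega

lemma uVal_surj {m i y : ℕ} (hi1 : 1 ≤ i) (hi2 : i ≤ m + 1) (hy : y ≤ m) :
    ∃ x ≤ m + 1, uVal i x = y := by
  rcases Nat.eq_zero_or_pos y with h | h
  · exact ⟨0, by omega, by simp [uVal, h]⟩
  · by_cases hyi : y < i
    · exact ⟨y, by omega, by unfold uVal; split_ifs <;> first | exact absurd ‹False› not_false | omega⟩
    · exact ⟨y + 1, by omega, by unfold uVal; split_ifs <;> first | exact absurd ‹False› not_false | omega⟩

lemma uVal_mono {i p q : ℕ} (hpq : p < q) (hp : uVal i p ≠ 0) (hq : uVal i q ≠ 0) :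
    uVal i p < uVal i q := by
  unfold uVal at *
  split_ifs at * <;> first | exact absurd ‹False› not_false | omega

lemma uListVal_props (n : ℕ) (α : List ℕ) (hp : List.Pairwise (· < ·) α)
    (hb : ∀ i ∈ α, 1 ≤ i ∧ i ≤ n) (hlen : α.length ≤ n) :
    uListVal α 0 = 0 ∧
    (∀ x ≤ n, uListVal α x ≤ n - α.length) ∧
    (∀ y ≤ n - α.length, ∃ x ≤ n, uListVal α x = y) ∧
    (∀ p q, p < q → q ≤ n → uListVal α p ≠ 0 → uListVal α q ≠ 0 →
      uListVal α p < uListVal α q) := by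
  induction α with
  | nil => exact ⟨rfl, fun x hx => by simpa [uListVal] using hx,
      fun y hy => ⟨y, by simpa using hy, rfl⟩, fun p q h _ _ _ => h⟩
  | cons i rest ih =>
    have hrest : rest.length ≤ n := by simp at hlen; omega
    have hib := inc_bound rest i hp (fun x hx => (hb x hx).2)
    have hi1 : 1 ≤ i := (hb i (by simp)).1
    obtain ⟨h0, hle, hsurj, hmono⟩ := ih (List.pairwise_cons.1 hp).2
      (fun j hj => hb j (by simp [hj])) hrest
    have hM : i ≤ (n - rest.length - 1) + 1 := by omega
    refine ⟨?_, ?_, ?_, ?_⟩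
    · simp [uListVal, h0, uVal]
    · intro x hx
      have h1 := hle x hx
      have h2 := uVal_le (m := n - rest.length - 1) hi1 hM (v := uListVal rest x) (by omega)
      simp only [uListVal, List.length_cons]
      omega
    · intro y hy
      obtain ⟨x', hx', hux'⟩ := uVal_surj (m := n - rest.length - 1) (i := i) (y := y)
        hi1 hM (by simp only [List.length_cons] at hy; omega)
      obtain ⟨x, hx, hux⟩ := hsurj x' (by omega)
      exact ⟨x, hx, by simp [uListVal, hux, hux']⟩
    · intro p q hpq hq hp0 hq0
      simp only [uListVal] at hp0 hq0 ⊢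
      have hrp : uListVal rest p ≠ 0 := fun h => hp0 (by simp [h, uVal])
      have hrq : uListVal rest q ≠ 0 := fun h => hq0 (by simp [h, uVal])
      exact uVal_mono (hmono p q hpq hq hrp hrq) hp0 hq0

lemma uListVal_append (β : List ℕ) (j v : ℕ) :
    uListVal (β ++ [j]) v = uListVal β (uVal j v) := by
  induction β with
  | nil => rfl
  | cons i rest ih => simp [uListVal, ih]

lemma uListVal_fix (β : List ℕ) (v : ℕ) (h : ∀ i ∈ β, v < i) :
    uListVal β v = v := by
  induction β with
  | nil => rfl
  | cons i rest ih =>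
    have h1 := h i (by simp)
    rw [uListVal, ih (fun j hj => h j (by simp [hj]))]
    unfold uVal; split_ifs <;> first | exact absurd ‹False› not_false | omega

lemma uListVal_mem_zero (β : List ℕ) (hp : List.Pairwise (· < ·) β) :
    ∀ i ∈ β, uListVal β i = 0 := by
  induction β with
  | nil => simp
  | cons a rest ih =>
    intro i hi
    rcases List.mem_cons.1 hi with h | h
    · subst h
      rw [uListVal, uListVal_fix rest i (fun j hj => (List.pairwise_cons.1 hp).1 j hj)]
      simp [uVal]
    · rw [uListVal, ih (List.pairwise_cons.1 hp).2 i h]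
      simp [uVal]

lemma strictMono_le {a b : ℕ} (f : Fin a → Fin b) (hf : StrictMono f) (x : Fin a) :
    (x : ℕ) ≤ (f x : ℕ) := by
  obtain ⟨v, hv⟩ := x
  induction v with
  | zero => simp
  | succ v ihv =>
    have h1 : (⟨v, by omega⟩ : Fin a) < ⟨v + 1, hv⟩ := by simp [Fin.lt_def]
    have h2 := hf h1
    have h3 := ihv (by omega)
    simp only [Fin.lt_def, Fin.val_mk] at h2 h3 ⊢
    omega


lemma fin_ne_zero_val {m : ℕ} (a : Fin (m + 1)) (h : a ≠ 0) : (a : ℕ) ≠ 0 := by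
  intro hv
  exact h (Fin.ext (by simp [hv]))

lemma part1 (n : ℕ) (α : List ℕ) (hmi : IsMultiIndex n α) (hlen : α.length ≤ n) :
    Function.Surjective (uComp n α hlen) ∧ QuasiMonotonic (uComp n α hlen) := by
  obtain ⟨hc, hb⟩ := hmi
  have hp := List.isChain_iff_pairwise.1 hc
  have hval := uComp_val n α hp hb hlen
  obtain ⟨h0, hle, hsurj, hmono⟩ := uListVal_props n α hp hb hlen
  constructor
  · intro y
    obtain ⟨x, hx, hxy⟩ := hsurj (y : ℕ) (Nat.lt_succ_iff.mp y.isLt)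
    refine ⟨⟨x, by omega⟩, Fin.ext ?_⟩
    rw [hval]
    exact hxy
  · constructor
    · apply Fin.ext
      rw [hval]
      simpa using h0
    · intro p q hpq hp0 hq0
      rw [Fin.lt_def] at hpq ⊢
      rw [hval, hval]
      exact hmono (p : ℕ) (q : ℕ) hpq (Nat.lt_succ_iff.mp q.isLt)
        (by rw [← hval]; exact fin_ne_zero_val _ hp0)
        (by rw [← hval]; exact fin_ne_zero_val _ hq0)

/-- ℕ-level elementary coface. -/
def dVal (j v : ℕ) : ℕ := if v < j then v else v + 1

set_option maxHeartbeats 1000000 in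
lemma part2 : ∀ (n m : ℕ) (h : Fin (n + 1) → Fin (m + 1)), Function.Surjective h →
    QuasiMonotonic h → ∃ α : List ℕ, List.Pairwise (· < ·) α ∧
      (∀ i ∈ α, 1 ≤ i ∧ i ≤ n) ∧ α.length = n - m ∧
      ∀ x : Fin (n + 1), ((h x : ℕ)) = uListVal α (x : ℕ) := by
  intro n
  induction n with
  | zero =>
    intro m h hs hqm
    have hcard : m + 1 ≤ 1 := by simpa using Fintype.card_le_of_surjective h hs
    refine ⟨[], by simp, by simp, by simp, fun x => ?_⟩
    have h1 : (h x : ℕ) < m + 1 := (h x).isLt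
    have h2 : (x : ℕ) < 1 := x.isLt
    simp only [uListVal]
    omega
  | succ n ih =>
    intro m h hs hqm
    obtain ⟨h0, hmono⟩ := hqm
    have hcard : m + 1 ≤ n + 2 := by simpa using Fintype.card_le_of_surjective h hs
    set S : Finset (Fin (n + 2)) := Finset.univ.filter (fun k => k ≠ 0 ∧ h k = 0) with hS
    by_cases hSne : S.Nonempty
    · -- there is a nonzero element mapped to 0
      set j : Fin (n + 2) := S.max' hSne with hj
      have hjS : j ∈ S := S.max'_mem hSne
      have hjne : j ≠ 0 ∧ h j = 0 := by
        have := hjS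
        rw [hS, Finset.mem_filter] at this
        exact this.2
      have hj1 : 1 ≤ (j : ℕ) := Nat.pos_of_ne_zero (fin_ne_zero_val j hjne.1)
      have hjmax : ∀ k : Fin (n + 2), k ≠ 0 → h k = 0 → (k : ℕ) ≤ (j : ℕ) :=
        fun k hk1 hk2 => S.le_max' k
          (by rw [hS, Finset.mem_filter]; exact ⟨Finset.mem_univ _, hk1, hk2⟩)
      -- m < n + 1
      have hmn : m ≤ n := by
        by_contra hcon
        have hm : m = n + 1 := by omega
        subst hm
        have hinj : Function.Injective h := (Finite.injective_iff_surjective).2 hs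
        exact hjne.1 (hinj (by rw [hjne.2, h0]))
      -- the map g = h ∘ d_j
      have hdb : ∀ v ≤ n, dVal (j : ℕ) v < n + 2 := by
        intro v hv; unfold dVal; split_ifs <;> omega
      set g : Fin (n + 1) → Fin (m + 1) :=
        fun k => h ⟨dVal (j : ℕ) (k : ℕ), hdb _ (Nat.lt_succ_iff.mp k.isLt)⟩ with hg
      have hgapp : ∀ k : Fin (n + 1), g k = h ⟨dVal (j : ℕ) (k : ℕ),
          hdb _ (Nat.lt_succ_iff.mp k.isLt)⟩ := fun k => rfl
      have hzero : ((⟨dVal (j : ℕ) ((0 : Fin (n + 1)) : ℕ), hdb _ (by simp)⟩ : Fin (n + 2))) = 0 := by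
        apply Fin.ext
        simp only [Fin.val_zero]
        unfold dVal
        split_ifs <;> omega
      have hg0 : g 0 = 0 := by rw [hgapp, hzero, h0]
      have hgmono : ∀ p q : Fin (n + 1), p < q → g p ≠ 0 → g q ≠ 0 → g p < g q := by
        intro p q hpq hp0 hq0
        simp only [hgapp] at hp0 hq0 ⊢
        apply hmono _ _ _ hp0 hq0
        rw [Fin.lt_def] at hpq ⊢
        simp only [Fin.val_mk]
        unfold dVal
        split_ifs <;> omega
      have hgsurj : Function.Surjective g := by
        intro y
        by_cases hy : y = 0
        · exact ⟨0, by rw [hg0, hy]⟩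
        · obtain ⟨x, hx⟩ := hs y
          have hx0 : (x : ℕ) ≠ 0 := by
            intro hc
            apply hy
            rw [← hx, ← h0]
            congr 1
            exact Fin.ext (by simp [hc])
          have hxj : (x : ℕ) ≠ (j : ℕ) := by
            intro hc
            apply hy
            rw [← hx, ← hjne.2]
            congr 1
            exact Fin.ext hc
          refine ⟨⟨if (x : ℕ) < (j : ℕ) then (x : ℕ) else (x : ℕ) - 1, by
            have := x.isLt; split_ifs <;> omega⟩, ?_⟩
          rw [hgapp, ← hx]
          congr 1
          apply Fin.ext
          simp only [Fin.val_mk]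
          unfold dVal
          split_ifs <;> omega
      obtain ⟨β, hβp, hβb, hβlen, hβval⟩ := ih m g hgsurj ⟨hg0, hgmono⟩
      -- all elements of β are < j
      have hβlt : ∀ i ∈ β, i < (j : ℕ) := by
        intro i hi
        have hi1 : 1 ≤ i := (hβb i hi).1
        have hin : i ≤ n := (hβb i hi).2
        have hz : uListVal β i = 0 := uListVal_mem_zero β hβp i hi
        have hgz : (g ⟨i, Nat.lt_succ_of_le hin⟩ : ℕ) = 0 := by
          rw [hβval ⟨i, Nat.lt_succ_of_le hin⟩]
          exact hz
        have hgz' : g ⟨i, Nat.lt_succ_of_le hin⟩ = 0 := Fin.ext (by simpa using hgz)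
        rw [hgapp] at hgz'
        by_contra hcon
        push_neg at hcon
        have hdval : dVal (j : ℕ) i = i + 1 := by unfold dVal; split_ifs <;> omega
        have hgz2 : h (⟨i + 1, Nat.succ_lt_succ (Nat.lt_succ_of_le hin)⟩ : Fin (n + 2)) = 0 := by
          rw [← hgz']
          congr 1
          exact Fin.ext (by simp [hdval])
        have := hjmax ⟨i + 1, Nat.succ_lt_succ (Nat.lt_succ_of_le hin)⟩ (by
          intro hc
          have := congrArg Fin.val hc
          simp at this) hgz2
        simp only [Fin.val_mk] at this
        omega
      refine ⟨β ++ [(j : ℕ)], ?_, ?_, ?_, ?_⟩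
      · rw [List.pairwise_append]
        exact ⟨hβp, by simp, fun a ha b hb => by
          simp only [List.mem_singleton] at hb
          subst hb
          exact hβlt a ha⟩
      · intro i hi
        rcases List.mem_append.1 hi with hi | hi
        · exact ⟨(hβb i hi).1, le_trans (hβb i hi).2 (by omega)⟩
        · simp only [List.mem_singleton] at hi
          subst hi
          exact ⟨hj1, by omega⟩
      · simp only [List.length_append, List.length_singleton, hβlen]
        omega
      · intro x
        rw [uListVal_append]
        have hvb : uVal (j : ℕ) (x : ℕ) ≤ n := by
          have hx : (x : ℕ) ≤ n + 1 := Nat.lt_succ_iff.mp x.isLt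
          exact uVal_le hj1 (by omega) hx
        have key : h x = g ⟨uVal (j : ℕ) (x : ℕ), Nat.lt_succ_of_le hvb⟩ := by
          by_cases hc1 : (x : ℕ) = 0
          · have hx0 : x = 0 := Fin.ext (by simp [hc1])
            have harg : (⟨uVal (j : ℕ) (x : ℕ), Nat.lt_succ_of_le hvb⟩ : Fin (n + 1)) = 0 :=
              Fin.ext (by simp [hc1, uVal])
            rw [harg, hg0, hx0, h0]
          · by_cases hc2 : (x : ℕ) = (j : ℕ)
            · have hxj : x = j := Fin.ext hc2
              have harg : (⟨uVal (j : ℕ) (x : ℕ), Nat.lt_succ_of_le hvb⟩ : Fin (n + 1)) = 0 :=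
                Fin.ext (by
                  simp only [Fin.val_mk, Fin.val_zero]
                  unfold uVal
                  split_ifs <;> omega)
              rw [harg, hg0, hxj, hjne.2]
            · rw [hgapp]
              congr 1
              apply Fin.ext
              simp only [Fin.val_mk]
              unfold uVal dVal
              split_ifs <;> omega
        rw [key, hβval]
    · -- S is empty : h is injective, hence strictly monotonic and the identity
      have hne : ∀ k : Fin (n + 2), k ≠ 0 → h k ≠ 0 := by
        intro k hk hc
        exact hSne ⟨k, by rw [hS, Finset.mem_filter]; exact ⟨Finset.mem_univ _, hk, hc⟩⟩
      have hsm : StrictMono h := by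
        intro a b hab
        by_cases ha : a = 0
        · subst ha
          rw [h0]
          have hb : b ≠ 0 := Fin.pos_iff_ne_zero.mp hab
          exact Fin.pos_iff_ne_zero.mpr (hne b hb)
        · have hb : b ≠ 0 := by
            intro hc
            subst hc
            exact absurd hab (by simp [Fin.lt_def])
          exact hmono a b hab (hne a ha) (hne b hb)
      have hinj : Function.Injective h := hsm.injective
      have hcard2 : n + 2 ≤ m + 1 := by simpa using Fintype.card_le_of_injective h hinj
      have hm : m = n + 1 := by omega
      refine ⟨[], by simp, by simp, by simp only [List.length_nil]; omega, fun x => ?_⟩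
      simp only [uListVal]
      have hle1 : (x : ℕ) ≤ (h x : ℕ) := strictMono_le h hsm x
      -- inverse direction using the inverse bijection
      have hbij : Function.Bijective h := ⟨hinj, hs⟩
      set e := Equiv.ofBijective h hbij with he
      have hsymm : StrictMono (fun y => e.symm y) := by
        intro a b hab
        rcases lt_trichotomy (e.symm a) (e.symm b) with hlt | heq | hgt
        · exact hlt
        · exfalso
          have : a = b := by
            have := congrArg e heq
            simpa using this
          exact absurd this hab.ne
        · exfalso
          have h1 := hsm hgt
          have h2 : h (e.symm b) = b := e.apply_symm_apply b
          have h3 : h (e.symm a) = a := e.apply_symm_apply a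
          rw [h2, h3] at h1
          exact absurd hab (not_lt.mpr (le_of_lt h1))
      have hle2 : ((h x : Fin (m+1)) : ℕ) ≤ (e.symm (h x) : ℕ) := strictMono_le _ hsymm (h x)
      have hfix : e.symm (h x) = x := e.symm_apply_apply x
      rw [hfix] at hle2
      omega

end QMAux

/-- the quasi-monotonic surjections are precisely the maps `u_α`. -/
theorem quasiMonotonic_surjections :
    -- every `u_α` is a surjective quasi-monotonic function
    (∀ (n : ℕ) (α : List ℕ) (hmi : IsMultiIndex n α) (hlen : α.length ≤ n),
      Function.Surjective (uComp n α hlen) ∧ QuasiMonotonic (uComp n α hlen)) ∧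
    -- conversely, every surjective quasi-monotonic `h : [n] → [m]` is some `u_α`
    (∀ (n m : ℕ) (h : Fin (n + 1) → Fin (m + 1)),
      Function.Surjective h → QuasiMonotonic h →
      ∃ (hmn : m ≤ n) (α : List ℕ) (hlen : α.length ≤ n),
        IsMultiIndex n α ∧
          ∃ _ : α.length = n - m,
            ∀ x : Fin (n + 1), h x = Fin.cast (by omega) (uComp n α hlen x)) := by
  constructor
  · exact fun n α hmi hlen => QMAux.part1 n α hmi hlen
  · intro n m h hs hqm
    have hmn : m ≤ n := by
      have := Fintype.card_le_of_surjective h hs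
      simp only [Fintype.card_fin] at this
      omega
    obtain ⟨α, hp, hb, hlen', hval⟩ := QMAux.part2 n m h hs hqm
    have hlen : α.length ≤ n := by omega
    refine ⟨hmn, α, hlen, ⟨List.isChain_iff_pairwise.mpr hp, hb⟩, hlen', fun x => ?_⟩
    apply Fin.ext
    rw [Fin.coe_cast, QMAux.uComp_val n α hp hb hlen x]
    exact hval x
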